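/- Let r ≥ 3, n ≥ 1, S ⊆ [r]^n. If the game G_S is trivial (val(G_S) = 1), then S contains a combinatorial line. -/
import Mathlib


/-- The value of an `r`-prover game: the question set is `Qbar`, a finite set of
question tuples; `V` is the verification predicate; the value is the maximum over
strategies (one function `Q j → A j` per prover) of the probability, over a uniformly
random question tuple from `Qbar`, that the verifier accepts. -/
noncomputable def gameValue {r : ℕ} {Q A : Fin r → Type}
    (Qbar : Finset (∀ j, Q j)) (V : (∀ j, Q j) → (∀ j, A j) → Bool) : ℝ :=
  sSup { x : ℝ | ∃ S : ∀ j, Q j → A j,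
    x = ((Qbar.filter fun q => V q (fun j => S j (q j)) = true).card : ℝ) / (Qbar.card : ℝ) }

/-- The value of the `n`-fold parallel repetition of a game: questions are `n`-tuples
of question tuples sampled independently and uniformly from `Qbar`, each prover `j`
sees only its own vector of questions, and the verifier accepts iff `V` accepts in
every coordinate. -/
noncomputable def repValue {r : ℕ} {Q A : Fin r → Type} [∀ j, DecidableEq (Q j)]
    (n : ℕ) (Qbar : Finset (∀ j, Q j)) (V : (∀ j, Q j) → (∀ j, A j) → Bool) : ℝ :=
  sSup { x : ℝ | ∃ S : ∀ j, (Fin n → Q j) → (Fin n → A j),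
    x = (((Fintype.piFinset fun _ : Fin n => Qbar).filter fun q =>
          ∀ i, V (q i) (fun j => S j (fun i' => q i' j) i) = true).card : ℝ) /
        ((Fintype.piFinset fun _ : Fin n => Qbar).card : ℝ) }
/-- The question set `Q̄_r ⊆ {0,1}^r`: tuples with exactly one coordinate equal to 1. -/
def QbarR (r : ℕ) : Finset (Fin r → Bool) :=
  Finset.univ.filter fun q => (Finset.univ.filter fun j => q j = true).card = 1
/-- The point of a combinatorial pattern `b` (wildcard = `none`) at `q`. -/
def patternLine {r n : ℕ} (b : Fin n → Option (Fin r)) (q : Fin r) : Fin n → Fin r :=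
  fun i => (b i).getD q

/-- `S ⊆ [r]^n` contains a combinatorial line: there is a pattern `b` (with at least one
wildcard) all of whose substitution instances lie in `S`. -/
def HasCombLine {r n : ℕ} (S : Set (Fin n → Fin r)) : Prop :=
  ∃ b : Fin n → Option (Fin r), (∃ i, b i = none) ∧ ∀ q : Fin r, patternLine b q ∈ S
/-- The verifier of the game `G_S` (for `S ⊆ [r]^n`) over the question set `Q̄_r`:
each prover answers a pair `(T, z) ∈ 2^[n] × [n]`; the verifier accepts iff all the
`z`'s agree, the special prover's `z` lies in its set `T`, and the sets `T⁽¹⁾,…,T⁽ʳ⁾`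
form a partition of `[n]` whose induced string (sending `i` to the unique `j` with
`i ∈ T⁽ʲ⁾`) belongs to `S`. -/
def VS {r n : ℕ} (S : Finset (Fin n → Fin r)) (q : Fin r → Bool)
    (ans : Fin r → Finset (Fin n) × Fin n) : Bool :=
  decide ((∀ j j' : Fin r, (ans j).2 = (ans j').2) ∧
    (∀ a : Fin r, q a = true → (ans a).2 ∈ (ans a).1) ∧
    (∃ s : Fin n → Fin r, s ∈ S ∧ ∀ (i : Fin n) (j : Fin r), s i = j ↔ i ∈ (ans j).1))


lemma exists_third {r : ℕ} (hr : 3 ≤ r) (j j' : Fin r) : ∃ a : Fin r, a ≠ j ∧ a ≠ j' := by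
  by_contra h
  push_neg at h
  have hsub : (Finset.univ : Finset (Fin r)) ⊆ {j, j'} := by
    intro a _
    by_cases ha : a = j
    · simp [ha]
    · simp [h a ha]
  have h1 := Finset.card_le_card hsub
  have h2 : ({j, j'} : Finset (Fin r)).card ≤ 2 := by
    apply le_trans (Finset.card_insert_le _ _)
    simp
  simp [Finset.card_univ] at h1
  omega

lemma mem_QbarR {r : ℕ} (a : Fin r) : (fun j => decide (j = a)) ∈ QbarR r := by
  simp [QbarR, Finset.filter_eq']

/-- If the game `G_S` is trivial (with `r ≥ 3`, `n ≥ 1`), then `S ⊆ [r]^n`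
contains a combinatorial line. -/
theorem statement5 (r n : ℕ) (hr : 3 ≤ r) (hn : 1 ≤ n)
    (S : Finset (Fin n → Fin r)) (htriv : gameValue (QbarR r) (VS S) = 1) :
    HasCombLine (↑S : Set (Fin n → Fin r)) := by
  classical
  have hr0 : 0 < r := by omega
  set g : (∀ _ : Fin r, Bool → Finset (Fin n) × Fin n) → ℝ := fun St =>
    (((QbarR r).filter fun q => VS S q (fun j => St j (q j)) = true).card : ℝ) /
      ((QbarR r).card : ℝ) with hg
  have hone : (1 : ℝ) ∈ { x : ℝ | ∃ St : ∀ _ : Fin r, Bool → Finset (Fin n) × Fin n,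
      x = g St } := by
    rw [← htriv]
    unfold gameValue
    apply Set.Nonempty.csSup_mem
    · exact ⟨g (fun _ _ => (∅, ⟨0, hn⟩)), fun _ _ => (∅, ⟨0, hn⟩), rfl⟩
    · have he : { x : ℝ | ∃ St : ∀ _ : Fin r, Bool → Finset (Fin n) × Fin n,
          x = g St } = Set.range g := by
        ext x
        exact ⟨fun ⟨St, h⟩ => ⟨St, h.symm⟩, fun ⟨St, h⟩ => ⟨St, h.symm⟩⟩
      rw [show { x : ℝ | ∃ St : ∀ j : Fin r, Bool → Finset (Fin n) × Fin n,
          x = (((QbarR r).filter fun q => VS S q (fun j => St j (q j)) = true).card : ℝ) /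
            ((QbarR r).card : ℝ) } = Set.range g from he]
      exact Set.finite_range g
  obtain ⟨St, hSt⟩ := hone
  -- the strategy `St` wins with probability one, so it wins on every question
  have hQpos : 0 < (QbarR r).card :=
    Finset.card_pos.2 ⟨_, mem_QbarR (⟨0, hr0⟩ : Fin r)⟩
  have hcard : ((QbarR r).filter fun q => VS S q (fun j => St j (q j)) = true).card
      = (QbarR r).card := by
    have hD : ((QbarR r).card : ℝ) ≠ 0 := by positivity
    have := hSt.symm
    rw [hg] at this
    field_simp at this
    exact_mod_cast this
  have hall : ∀ q ∈ QbarR r, VS S q (fun j => St j (q j)) = true := by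
    intro q hq
    have : ((QbarR r).filter fun q => VS S q (fun j => St j (q j)) = true) = QbarR r :=
      Finset.eq_of_subset_of_card_le (Finset.filter_subset _ _) (le_of_eq hcard.symm)
    have hq' : q ∈ (QbarR r).filter fun q => VS S q (fun j => St j (q j)) = true := by
      rw [this]; exact hq
    exact (Finset.mem_filter.1 hq').2
  -- unpack the verifier's acceptance on each question tuple
  have hP : ∀ a : Fin r,
      (∀ j j' : Fin r, (St j (decide (j = a))).2 = (St j' (decide (j' = a))).2) ∧
      (St a true).2 ∈ (St a true).1 ∧
      ∃ s : Fin n → Fin r, s ∈ S ∧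
        ∀ (i : Fin n) (j : Fin r), s i = j ↔ i ∈ (St j (decide (j = a))).1 := by
    intro a
    have h := hall (fun j => decide (j = a)) (mem_QbarR a)
    simp only [VS, decide_eq_true_eq] at h
    obtain ⟨h1, h2, h3⟩ := h
    refine ⟨h1, ?_, h3⟩
    have hd : decide (a = a) = true := by simp
    have := h2 a rfl
    rwa [hd] at this
  have hdecf : ∀ {j a : Fin r}, j ≠ a → decide (j = a) = false :=
    fun h => decide_eq_false h
  -- disjointness of the `false`-answer sets
  have hdisj : ∀ (i : Fin n) (j j' : Fin r), j ≠ j' →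
      i ∈ (St j false).1 → i ∈ (St j' false).1 → False := by
    intro i j j' hjj' hj hj'
    obtain ⟨a, haj, haj'⟩ := exists_third hr j j'
    obtain ⟨s, _, hiff⟩ := (hP a).2.2
    have e1 : s i = j := by
      apply (hiff i j).2
      rwa [hdecf (fun h => haj h.symm)]
    have e2 : s i = j' := by
      apply (hiff i j').2
      rwa [hdecf (fun h => haj' h.symm)]
    exact hjj' (e1 ▸ e2)
  -- the common coordinate z
  have hzeq : ∀ j j' : Fin r, (St j false).2 = (St j' false).2 := by
    intro j j'
    by_cases hjj' : j = j'
    · rw [hjj']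
    · obtain ⟨a, haj, haj'⟩ := exists_third hr j j'
      have h1 := (hP a).1 j j'
      rwa [hdecf (fun h => haj h.symm), hdecf (fun h => haj' h.symm)] at h1
  set z : Fin n := (St (⟨0, hr0⟩ : Fin r) false).2 with hz
  have hz' : ∀ a : Fin r, (St a true).2 = z := by
    intro a
    obtain ⟨j, hja, _⟩ := exists_third hr a a
    have h1 := (hP a).1 a j
    have hd : decide (a = a) = true := by simp
    rw [hd, hdecf hja] at h1
    rw [h1, hz, hzeq]
  have hzmem : ∀ a : Fin r, z ∈ (St a true).1 := by
    intro a
    have := (hP a).2.1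
    rwa [hz' a] at this
  -- `z` in the special prover's set, for each round, forces s_a z = a
  have hnotz : ¬ ∃ j : Fin r, z ∈ (St j false).1 := by
    rintro ⟨j, hjz⟩
    obtain ⟨a, haj, _⟩ := exists_third hr j j
    obtain ⟨s, _, hiff⟩ := (hP a).2.2
    have e1 : s z = j := by
      apply (hiff z j).2
      rwa [hdecf (fun h => haj h.symm)]
    have e2 : s z = a := by
      apply (hiff z a).2
      have hd : decide (a = a) = true := by simp
      rw [hd]
      exact hzmem a
    exact haj (e2 ▸ e1)
  -- build the pattern
  set b : Fin n → Option (Fin r) := fun i =>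
    if h : ∃ j : Fin r, i ∈ (St j false).1 then some h.choose else none with hb
  refine ⟨b, ⟨z, ?_⟩, ?_⟩
  · rw [hb]
    exact dif_neg hnotz
  · intro q
    obtain ⟨s, hsS, hiff⟩ := (hP q).2.2
    have hkey : patternLine b q = s := by
      funext i
      by_cases h : ∃ j : Fin r, i ∈ (St j false).1
      · have hbi : b i = some h.choose := by rw [hb]; exact dif_pos h
        have hchoose : i ∈ (St h.choose false).1 := h.choose_spec
        have : patternLine b q i = h.choose := by
          simp [patternLine, hbi]
        rw [this]
        by_cases hjq : h.choose = q
        · by_contra hne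
          have hjne : s i ≠ h.choose := fun hh => hne hh.symm
          have hmem : i ∈ (St (s i) (decide (s i = q))).1 := (hiff i (s i)).1 rfl
          rw [hdecf (hjq ▸ hjne)] at hmem
          exact hdisj i (s i) h.choose hjne hmem hchoose
        · exact ((hiff i h.choose).2 (by rwa [hdecf hjq])).symm
      · have hbi : b i = none := by rw [hb]; exact dif_neg h
        have : patternLine b q i = q := by simp [patternLine, hbi]
        rw [this]
        by_contra hne
        have hjne : s i ≠ q := fun hh => hne hh.symm
        have hmem : i ∈ (St (s i) (decide (s i = q))).1 := (hiff i (s i)).1 rfl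
        rw [hdecf hjne] at hmem
        exact h ⟨s i, hmem⟩
    rw [hkey]
    exact hsS
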